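/- Let ρ = (ρ_α)_{α∈I} be a family of convex risk measures on a convex cone X of random variables containing all constants, each satisfying positive homogeneity [PH] (ρ_β(λX) = λρ_β(X) for all λ > 0), with ρ_α(X) decreasing in α. Then for every X ∈ X^n and α ∈ I, the map w ↦ DQ^ρ_α(w ⊙ X) is quasi-convex on the simplex Δ_n: for all w, v ∈ Δ_n and λ ∈ [0,1], DQ^ρ_α((λw + (1−λ)v) ⊙ X) ≤ max{ DQ^ρ_α(w ⊙ X), DQ^ρ_α(v ⊙ X) }. -/
import Mathlib


open MeasureTheory Filter

open scoped Classical in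
/-- The diversification quotient `DQ^ρ_α` built from the family `ρ = (ρ_β)_{β ∈ I}`,
with index set `I = (0, ᾱ)` and the convention `inf ∅ = ᾱ`. -/
noncomputable def DQ {Ω : Type*} {n : ℕ} (αbar : EReal) (ρ : ℝ → (Ω → ℝ) → ℝ)
    (α : ℝ) (X : Fin n → Ω → ℝ) : EReal :=
  (if ({β : ℝ | 0 < β ∧ (β : EReal) < αbar ∧
        ρ β (fun ω => ∑ i, X i ω) ≤ ∑ i, ρ α (X i)}).Nonempty
    then ((sInf {β : ℝ | 0 < β ∧ (β : EReal) < αbar ∧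
        ρ β (fun ω => ∑ i, X i ω) ≤ ∑ i, ρ α (X i)} : ℝ) : EReal)
    else αbar) * ((α⁻¹ : ℝ) : EReal)

private lemma sum_mem_cone {Ω : Type*} (𝒳 : Set (Ω → ℝ))
    (hadd : ∀ X ∈ 𝒳, ∀ Y ∈ 𝒳, X + Y ∈ 𝒳) :
    ∀ (n : ℕ), 0 < n → ∀ f : Fin n → Ω → ℝ, (∀ i, f i ∈ 𝒳) →
      (fun ω => ∑ i, f i ω) ∈ 𝒳 := by
  intro n
  induction n with
  | zero => intro h; omega
  | succ m ih =>
    intro _ f hf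
    rcases Nat.eq_zero_or_pos m with hm | hm
    · subst hm
      have : (fun ω => ∑ i, f i ω) = f 0 := by funext ω; simp
      rw [this]; exact hf 0
    · have h1 := ih hm (fun i => f i.succ) (fun i => hf _)
      have h2 := hadd (f 0) (hf 0) _ h1
      have : (fun ω => ∑ i, f i ω) = f 0 + fun ω => ∑ i : Fin m, f i.succ ω := by
        funext ω; simp [Fin.sum_univ_succ]
      rw [this]; exact h2

/-- for a decreasing family of convex, positively homogeneous risk measures,
`w ↦ DQ^ρ_α(w ⊙ X)` is quasi-convex on the simplex `Δ_n`. -/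
theorem stmt_14 {Ω : Type*} (𝒳 : Set (Ω → ℝ))
    (hadd : ∀ X ∈ 𝒳, ∀ Y ∈ 𝒳, X + Y ∈ 𝒳)
    (hsmul : ∀ X ∈ 𝒳, ∀ c : ℝ, 0 < c → c • X ∈ 𝒳)
    (hconst : ∀ c : ℝ, (fun _ : Ω => c) ∈ 𝒳)
    (αbar : EReal) (hαbar : 0 < αbar)
    (ρ : ℝ → (Ω → ℝ) → ℝ)
    (hdec : ∀ Y ∈ 𝒳, ∀ β γ : ℝ, 0 < β → (β : EReal) < αbar → 0 < γ → (γ : EReal) < αbar →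
      β ≤ γ → ρ γ Y ≤ ρ β Y)
    (hconv : ∀ β : ℝ, 0 < β → (β : EReal) < αbar → ∀ U ∈ 𝒳, ∀ V ∈ 𝒳, ∀ s : ℝ,
      0 ≤ s → s ≤ 1 → ρ β (s • U + (1 - s) • V) ≤ s * ρ β U + (1 - s) * ρ β V)
    (hPH : ∀ β : ℝ, 0 < β → (β : EReal) < αbar → ∀ U ∈ 𝒳, ∀ l : ℝ, 0 < l →
      ρ β (l • U) = l * ρ β U)
    (α : ℝ) (hα : 0 < α) (hαI : (α : EReal) < αbar)
    (n : ℕ) (hn : 0 < n) (X : Fin n → Ω → ℝ) (hX : ∀ i, X i ∈ 𝒳)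
    (w v : Fin n → ℝ)
    (hw : (∀ i, 0 ≤ w i ∧ w i ≤ 1) ∧ ∑ i, w i = 1)
    (hv : (∀ i, 0 ≤ v i ∧ v i ≤ 1) ∧ ∑ i, v i = 1)
    (t : ℝ) (ht0 : 0 ≤ t) (ht1 : t ≤ 1) :
    DQ αbar ρ α (fun i => (t * w i + (1 - t) * v i) • X i)
      ≤ max (DQ αbar ρ α (fun i => w i • X i)) (DQ αbar ρ α (fun i => v i • X i)) := by
  classical
  set u : Fin n → ℝ := fun i => t * w i + (1 - t) * v i with hu_def
  have hu0 : ∀ i, 0 ≤ u i := fun i =>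
    add_nonneg (mul_nonneg ht0 (hw.1 i).1) (mul_nonneg (by linarith) (hv.1 i).1)
  -- the value of ρ α at the zero function
  have hρ0 : ρ α (fun _ : Ω => (0 : ℝ)) = 0 := by
    have h2 := hPH α hα hαI _ (hconst 0) 2 (by norm_num)
    have he : ((2 : ℝ) • fun _ : Ω => (0 : ℝ)) = (fun _ : Ω => (0 : ℝ)) := by
      funext ω; simp
    rw [he] at h2; linarith
  -- scaled random variables stay in the cone
  have hscale : ∀ (c : ℝ), 0 ≤ c → ∀ i, c • X i ∈ 𝒳 := by
    intro c hc i
    rcases hc.lt_or_eq with h | h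
    · exact hsmul _ (hX i) c h
    · have : c • X i = fun _ : Ω => (0 : ℝ) := by funext ω; simp [← h]
      rw [this]; exact hconst 0
  have hρscale : ∀ (c : ℝ), 0 ≤ c → ∀ i, ρ α (c • X i) = c * ρ α (X i) := by
    intro c hc i
    rcases hc.lt_or_eq with h | h
    · exact hPH α hα hαI _ (hX i) c h
    · have hcz : c • X i = fun _ : Ω => (0 : ℝ) := by funext ω; simp [← h]
      rw [hcz, hρ0, ← h, zero_mul]
  -- the three relevant sets
  set S : (Fin n → ℝ) → Set ℝ := fun p =>
    {β : ℝ | 0 < β ∧ (β : EReal) < αbar ∧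
      ρ β (fun ω => ∑ i, (p i • X i) ω) ≤ ∑ i, ρ α (p i • X i)} with hS_def
  have hbdd : ∀ p, BddBelow (S p) := fun p => ⟨0, fun x hx => hx.1.le⟩
  -- sums are in the cone
  have hsum : ∀ p : Fin n → ℝ, (∀ i, 0 ≤ p i) → (fun ω => ∑ i, (p i • X i) ω) ∈ 𝒳 := by
    intro p hp
    exact sum_mem_cone 𝒳 hadd n hn _ (fun i => hscale (p i) (hp i) i)
  -- upward closedness of the sets
  have hup : ∀ p : Fin n → ℝ, (∀ i, 0 ≤ p i) → ∀ β ∈ S p, ∀ γ : ℝ,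
      0 < γ → (γ : EReal) < αbar → β ≤ γ → γ ∈ S p := by
    intro p hp β hβ γ hγ0 hγI hβγ
    refine ⟨hγ0, hγI, le_trans ?_ hβ.2.2⟩
    exact hdec _ (hsum p hp) β γ hβ.1 hβ.2.1 hγ0 hγI hβγ
  -- the ρ-α value of the combined portfolio
  have hsum_ρ : ∑ i, ρ α (u i • X i)
      = t * (∑ i, ρ α (w i • X i)) + (1 - t) * (∑ i, ρ α (v i • X i)) := by
    have h1 : ∀ i ∈ Finset.univ, ρ α (u i • X i)
        = t * ρ α (w i • X i) + (1 - t) * ρ α (v i • X i) := by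
      intro i _
      rw [hρscale (u i) (hu0 i) i, hρscale (w i) (hw.1 i).1 i,
        hρscale (v i) (hv.1 i).1 i]
      simp only [hu_def]; ring
    rw [Finset.sum_congr rfl h1, Finset.sum_add_distrib, ← Finset.mul_sum, ← Finset.mul_sum]
  -- key inclusion: S w ∩ S v ⊆ S u
  have hkey : ∀ β : ℝ, β ∈ S w → β ∈ S v → β ∈ S u := by
    intro β hβw hβv
    refine ⟨hβw.1, hβw.2.1, ?_⟩
    have heq : (fun ω => ∑ i, (u i • X i) ω)
        = t • (fun ω => ∑ i, (w i • X i) ω) + (1 - t) • (fun ω => ∑ i, (v i • X i) ω) := by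
      funext ω
      simp only [Pi.add_apply, Pi.smul_apply, smul_eq_mul, hu_def, Finset.mul_sum,
        ← Finset.sum_add_distrib]
      exact Finset.sum_congr rfl fun i _ => by ring
    have hcv := hconv β hβw.1 hβw.2.1 _ (hsum w fun i => (hw.1 i).1)
      _ (hsum v fun i => (hv.1 i).1) t ht0 ht1
    rw [← heq] at hcv
    have : ρ β (fun ω => ∑ i, (u i • X i) ω)
        ≤ t * (∑ i, ρ α (w i • X i)) + (1 - t) * (∑ i, ρ α (v i • X i)) := by
      refine hcv.trans ?_
      have := hβw.2.2
      have := hβv.2.2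
      nlinarith [hβw.2.2, hβv.2.2]
    rw [hsum_ρ]; exact this
  -- the "if" values
  set A : (Fin n → ℝ) → EReal := fun p =>
    if (S p).Nonempty then ((sInf (S p) : ℝ) : EReal) else αbar with hA_def
  have hA_le_bar : ∀ p, A p ≤ αbar := by
    intro p
    by_cases h : (S p).Nonempty
    · simp only [hA_def, if_pos h]
      obtain ⟨β, hβ⟩ := h
      have h1 : sInf (S p) ≤ β := csInf_le (hbdd p) hβ
      exact le_of_lt (lt_of_le_of_lt (EReal.coe_le_coe_iff.2 h1) hβ.2.1)
    · simp only [hA_def, if_neg h]; exact le_rfl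
  -- core inequality
  have hcore : A u ≤ max (A w) (A v) := by
    by_cases hw' : (S w).Nonempty
    · by_cases hv' : (S v).Nonempty
      · -- both nonempty
        set a := sInf (S w) with ha_def
        set b := sInf (S v) with hb_def
        set m := max a b with hm_def
        -- every γ ∈ (m, αbar) belongs to S u
        have hγmem : ∀ γ : ℝ, m < γ → (γ : EReal) < αbar → γ ∈ S u := by
          intro γ hγ hγI
          have haγ : a < γ := lt_of_le_of_lt (le_max_left a b) hγ
          have hbγ : b < γ := lt_of_le_of_lt (le_max_right a b) hγ
          obtain ⟨β₁, hβ₁, hβ₁γ⟩ := exists_lt_of_csInf_lt hw' haγ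
          obtain ⟨β₂, hβ₂, hβ₂γ⟩ := exists_lt_of_csInf_lt hv' hbγ
          have hγ0 : 0 < γ := lt_trans hβ₁.1 hβ₁γ
          have hγw := hup w (fun i => (hw.1 i).1) β₁ hβ₁ γ hγ0 hγI hβ₁γ.le
          have hγv := hup v (fun i => (hv.1 i).1) β₂ hβ₂ γ hγ0 hγI hβ₂γ.le
          exact hkey γ hγw hγv
        -- m < αbar (as EReal)
        obtain ⟨β₁, hβ₁⟩ := id hw'
        obtain ⟨β₂, hβ₂⟩ := id hv'
        have haI : (a : EReal) < αbar :=
          lt_of_le_of_lt (EReal.coe_le_coe_iff.2 (csInf_le (hbdd w) hβ₁)) hβ₁.2.1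
        have hbI : (b : EReal) < αbar :=
          lt_of_le_of_lt (EReal.coe_le_coe_iff.2 (csInf_le (hbdd v) hβ₂)) hβ₂.2.1
        have hmI : (m : EReal) < αbar := by
          rcases max_cases a b with ⟨h1, _⟩ | ⟨h1, _⟩ <;> rw [hm_def, h1]
          · exact haI
          · exact hbI
        obtain ⟨c0, hc0m, hc0I⟩ := EReal.exists_between_coe_real hmI
        have hc0m' : m < c0 := EReal.coe_lt_coe_iff.1 hc0m
        have hc0mem : c0 ∈ S u := hγmem c0 hc0m' hc0I
        have hu' : (S u).Nonempty := ⟨c0, hc0mem⟩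
        -- sInf (S u) ≤ m
        have hinf : sInf (S u) ≤ m := by
          apply le_of_forall_pos_le_add
          intro ε hε
          set γ := min c0 (m + ε) with hγ_def
          have hγm : m < γ := lt_min hc0m' (by linarith)
          have hγI : (γ : EReal) < αbar :=
            lt_of_le_of_lt (EReal.coe_le_coe_iff.2 (min_le_left _ _)) hc0I
          have := csInf_le (hbdd u) (hγmem γ hγm hγI)
          calc sInf (S u) ≤ γ := this
            _ ≤ m + ε := min_le_right _ _
        simp only [hA_def, if_pos hw', if_pos hv', if_pos hu']
        have : ((sInf (S u) : ℝ) : EReal) ≤ ((m : ℝ) : EReal) :=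
          EReal.coe_le_coe_iff.2 hinf
        refine this.trans ?_
        rcases max_cases a b with ⟨h1, _⟩ | ⟨h1, _⟩ <;> rw [hm_def, h1]
        · exact le_max_left _ _
        · exact le_max_right _ _
      · -- S v empty
        have : A v = αbar := by simp only [hA_def, if_neg hv']
        calc A u ≤ αbar := hA_le_bar u
          _ = A v := this.symm
          _ ≤ max (A w) (A v) := le_max_right _ _
    · -- S w empty
      have : A w = αbar := by simp only [hA_def, if_neg hw']
      calc A u ≤ αbar := hA_le_bar u
        _ = A w := this.symm
        _ ≤ max (A w) (A v) := le_max_left _ _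
  -- conclude
  have hc : (0 : EReal) ≤ ((α⁻¹ : ℝ) : EReal) :=
    EReal.coe_nonneg.2 (inv_nonneg.2 hα.le)
  have hDQ : ∀ p : Fin n → ℝ, DQ αbar ρ α (fun i => p i • X i)
      = A p * ((α⁻¹ : ℝ) : EReal) := by
    intro p; rfl
  rw [hDQ u, hDQ w, hDQ v]
  calc A u * ((α⁻¹ : ℝ) : EReal)
      ≤ max (A w) (A v) * ((α⁻¹ : ℝ) : EReal) :=
        mul_le_mul_of_nonneg_right hcore hc
    _ ≤ max (A w * ((α⁻¹ : ℝ) : EReal)) (A v * ((α⁻¹ : ℝ) : EReal)) := by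
        rcases max_cases (A w) (A v) with ⟨h1, _⟩ | ⟨h1, _⟩ <;> rw [h1]
        · exact le_max_left _ _
        · exact le_max_right _ _
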